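/- arXiv:1912.05199 — 6 statements merged into one kernel-verified Lean document; each statement's English description precedes it below -/
import Mathlib

section
/- Let f : ℝ^m × ℝ^n → ℝ^m be continuous and strongly monotone with respect to its first argument x. Then there is a uniquely defined continuous function g : ℝ^n → ℝ^m such that f(g(y), y) = 0 for all y ∈ ℝ^n. -/
open scoped InnerProductSpace

namespace SMAux

noncomputable abbrev tl {k : ℕ} (a : EuclideanSpace ℝ (Fin (k+1))) : EuclideanSpace ℝ (Fin k) :=
  WithLp.toLp 2 (Fin.tail a)

noncomputable abbrev cns {k : ℕ} (v : ℝ) (u : EuclideanSpace ℝ (Fin k)) :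
    EuclideanSpace ℝ (Fin (k+1)) := WithLp.toLp 2 (Fin.cons v u.ofLp : Fin (k+1) → ℝ)

lemma inner_split {k : ℕ} (a b : EuclideanSpace ℝ (Fin (k+1))) :
    ⟪a, b⟫_ℝ = a 0 * b 0 + ⟪tl a, tl b⟫_ℝ := by
  simp [PiLp.inner_apply, Fin.sum_univ_succ, Fin.tail, mul_comm]

lemma norm_sq_split {k : ℕ} (a : EuclideanSpace ℝ (Fin (k+1))) :
    ‖a‖^2 = (a 0)^2 + ‖tl a‖^2 := by
  rw [← real_inner_self_eq_norm_sq, ← real_inner_self_eq_norm_sq]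
  simp only [PiLp.inner_apply, Fin.sum_univ_succ]
  simp [Fin.tail, sq]

lemma sub_cns {k : ℕ} (v v' : ℝ) (u u' : EuclideanSpace ℝ (Fin k)) :
    cns v u - cns v' u' = cns (v - v') (u - u') := by
  ext i
  refine Fin.cases ?_ ?_ i <;> simp

@[simp] lemma tl_cns {k : ℕ} (v : ℝ) (u : EuclideanSpace ℝ (Fin k)) : tl (cns v u) = u := by
  ext i; simp

@[simp] lemma cns_zero {k : ℕ} (v : ℝ) (u : EuclideanSpace ℝ (Fin k)) : (cns v u) 0 = v := by
  simp

lemma cont_cns (k : ℕ) :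
    Continuous (fun p : ℝ × EuclideanSpace ℝ (Fin k) => cns p.1 p.2) := by
  refine (PiLp.continuous_toLp 2 _).comp ?_
  apply continuous_pi
  intro i
  refine Fin.cases ?_ ?_ i
  · exact continuous_fst
  · intro j; exact (PiLp.continuous_apply 2 _ j).comp continuous_snd

theorem exists_cont : ∀ (m n : ℕ)
    (f : EuclideanSpace ℝ (Fin m) × EuclideanSpace ℝ (Fin n) → EuclideanSpace ℝ (Fin m)),
    Continuous f → ∀ c : ℝ, 0 < c →
    (∀ y x x', ⟪f (x, y) - f (x', y), x - x'⟫_ℝ ≥ c * ‖x - x'‖ ^ 2) →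
    ∃ g : EuclideanSpace ℝ (Fin n) → EuclideanSpace ℝ (Fin m),
      Continuous g ∧ ∀ y, f (g y, y) = 0 := by
  intro m
  induction m with
  | zero =>
    intro n f _ c _ _
    exact ⟨fun _ => 0, continuous_const, fun y => by ext i; exact i.elim0⟩
  | succ m ih =>
    intro n f hf c hc hmono
    set F : EuclideanSpace ℝ (Fin m) × EuclideanSpace ℝ (Fin (n+1)) → EuclideanSpace ℝ (Fin m) :=
      fun p => WithLp.toLp 2 (fun i => f (cns (p.2 0) p.1, tl p.2) i.succ) with hFdef
    have hFcont : Continuous F := by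
      refine (PiLp.continuous_toLp 2 _).comp ?_
      apply continuous_pi
      intro i
      have h1 : Continuous fun p : EuclideanSpace ℝ (Fin m) × EuclideanSpace ℝ (Fin (n+1)) =>
          cns (p.2 0) p.1 := by
        refine (PiLp.continuous_toLp 2 _).comp ?_
        apply continuous_pi
        intro j
        refine Fin.cases ?_ ?_ j
        · exact (PiLp.continuous_apply 2 _ (0 : Fin (n+1))).comp continuous_snd
        · intro j'
          exact (PiLp.continuous_apply 2 _ j').comp continuous_fst
      have h2 : Continuous fun p : EuclideanSpace ℝ (Fin m) × EuclideanSpace ℝ (Fin (n+1)) =>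
          (tl p.2 : EuclideanSpace ℝ (Fin n)) := by
        refine (PiLp.continuous_toLp 2 _).comp ?_
        apply continuous_pi
        intro j
        exact (PiLp.continuous_apply 2 _ j.succ).comp continuous_snd
      exact (PiLp.continuous_apply 2 _ i.succ).comp (hf.comp (h1.prodMk h2))
    have hFmono : ∀ z u u', ⟪F (u, z) - F (u', z), u - u'⟫_ℝ ≥ c * ‖u - u'‖ ^ 2 := by
      intro z u u'
      have h := hmono (tl z) (cns (z 0) u) (cns (z 0) u')
      rw [sub_cns] at h
      simp only [sub_self] at h
      rw [inner_split, norm_sq_split] at h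
      have htl : tl (f (cns (z 0) u, tl z) - f (cns (z 0) u', tl z)) = F (u, z) - F (u', z) := by
        ext i
        simp [tl, Fin.tail, hFdef]
      rw [htl] at h
      simp only [Fin.cons_zero, Fin.tail_cons, tl_cns, cns_zero] at h
      have : (0:ℝ)^2 = 0 := by norm_num
      nlinarith [h]
    obtain ⟨U, hUcont, hU0⟩ := ih (n+1) F hFcont c hc hFmono
    set X : ℝ × EuclideanSpace ℝ (Fin n) → EuclideanSpace ℝ (Fin (m+1)) :=
      fun p => cns p.1 (U (cns p.1 p.2)) with hXdef
    have hXcont : Continuous X :=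
      (cont_cns m).comp (continuous_fst.prodMk (hUcont.comp (cont_cns n)))
    set φ : ℝ × EuclideanSpace ℝ (Fin n) → ℝ := fun p => f (X p, p.2) 0 with hφdef
    have hφcont : Continuous φ :=
      (PiLp.continuous_apply 2 _ (0 : Fin (m+1))).comp (hf.comp (hXcont.prodMk continuous_snd))
    have hXsucc : ∀ (v : ℝ) (y : EuclideanSpace ℝ (Fin n)) (i : Fin m),
        f (X (v, y), y) i.succ = 0 := by
      intro v y i
      have h := congrArg (fun w : EuclideanSpace ℝ (Fin m) => w i) (hU0 (cns v y))
      simpa [hFdef, hXdef, tl, cns] using h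
    have hφmono : ∀ y v v', (φ (v, y) - φ (v', y)) * (v - v') ≥ c * (v - v') ^ 2 := by
      intro y v v'
      have h := hmono y (X (v, y)) (X (v', y))
      have hsub : X (v, y) - X (v', y) = cns (v - v') (U (cns v y) - U (cns v' y)) := by
        rw [hXdef]; exact sub_cns _ _ _ _
      rw [hsub, inner_split, norm_sq_split] at h
      have htl : tl (f (X (v, y), y) - f (X (v', y), y)) = 0 := by
        ext i
        simp [tl, Fin.tail, hXsucc]
      rw [htl] at h
      simp only [inner_zero_left, add_zero, Fin.cons_zero, Fin.tail_cons] at h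
      have hsq : (0:ℝ) ≤ ‖U (cns v y) - U (cns v' y)‖ ^ 2 := sq_nonneg _
      have heval : (f (X (v, y), y) - f (X (v', y), y)) 0 = φ (v, y) - φ (v', y) := by
        simp [hφdef]
      rw [heval] at h
      nlinarith [h, mul_nonneg hc.le hsq]
    have hex : ∀ y, ∃ v, φ (v, y) = 0 := by
      intro y
      have hcy : Continuous fun v => φ (v, y) :=
        hφcont.comp (continuous_id.prodMk continuous_const)
      by_cases h0 : φ (0, y) = 0
      · exact ⟨0, h0⟩
      · set R : ℝ := |φ (0, y)| / c with hR
        have hRpos : 0 < R := div_pos (abs_pos.mpr h0) hc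
        have h1 := hφmono y 0 (-R)
        have h2 := hφmono y R 0
        have hφ0 : |φ (0, y)| = c * R := by
          rw [hR]; field_simp
        have hmR : φ (-R, y) ≤ 0 := by
          have habs := le_abs_self (φ (0, y))
          have habs' := neg_abs_le (φ (0, y))
          nlinarith [h1, hRpos]
        have hpR : 0 ≤ φ (R, y) := by
          have habs := le_abs_self (φ (0, y))
          have habs' := neg_abs_le (φ (0, y))
          nlinarith [h2, hRpos]
        have hle : -R ≤ R := by linarith
        have := intermediate_value_Icc hle hcy.continuousOn
        obtain ⟨v, -, hv⟩ := this ⟨hmR, hpR⟩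
        exact ⟨v, hv⟩
    choose V hV using hex
    have key : ∀ y y', c * |V y' - V y| ≤ |φ (V y, y')| := by
      intro y y'
      have h := hφmono y' (V y) (V y')
      rw [hV y'] at h
      simp only [sub_zero] at h
      have h2 : |φ (V y, y')| * |V y - V y'| ≥ c * (V y - V y') ^ 2 := by
        calc c * (V y - V y') ^ 2 ≤ φ (V y, y') * (V y - V y') := h
        _ ≤ |φ (V y, y') * (V y - V y')| := le_abs_self _
        _ = |φ (V y, y')| * |V y - V y'| := abs_mul _ _
      rcases eq_or_ne (V y') (V y) with he | he
      · simp [he]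
      · have hd : 0 < |V y - V y'| := abs_pos.mpr (sub_ne_zero.mpr (Ne.symm he))
        rw [abs_sub_comm]
        nlinarith [h2, hd, sq_abs (V y - V y'), abs_nonneg (φ (V y, y'))]
    have hVcont : Continuous V := by
      rw [continuous_iff_continuousAt]
      intro y
      have hφy : Continuous fun y' => |φ (V y, y')| / c :=
        ((hφcont.comp (continuous_const.prodMk continuous_id)).abs).div_const c
      have ht : Filter.Tendsto (fun y' => |φ (V y, y')| / c) (nhds y) (nhds 0) := by
        have := hφy.continuousAt (x := y)
        simpa [ContinuousAt, hV y] using this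
      have hb : ∀ y', |V y' - V y| ≤ |φ (V y, y')| / c := by
        intro y'
        rw [le_div_iff₀ hc, mul_comm]
        exact key y y'
      have habs : Filter.Tendsto (fun y' => |V y' - V y|) (nhds y) (nhds 0) :=
        squeeze_zero (fun y' => abs_nonneg _) hb ht
      have hsub : Filter.Tendsto (fun y' => V y' - V y) (nhds y) (nhds 0) :=
        (tendsto_zero_iff_abs_tendsto_zero _).mpr habs
      have := hsub.add_const (V y)
      simpa [ContinuousAt] using this
    refine ⟨fun y => X (V y, y), ?_, ?_⟩
    · exact hXcont.comp (hVcont.prodMk continuous_id)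
    · intro y
      ext i
      refine Fin.cases ?_ ?_ i
      · exact hV y
      · intro j
        exact hXsucc (V y) y j

end SMAux

/-- If `f : ℝ^m × ℝ^n → ℝ^m` is continuous and strongly monotone with respect to its
first argument, then there is a uniquely defined continuous function `g : ℝ^n → ℝ^m`
with `f (g y, y) = 0` for all `y`. -/
theorem strongly_monotone_implicit_function {m n : ℕ}
    (f : EuclideanSpace ℝ (Fin m) × EuclideanSpace ℝ (Fin n) → EuclideanSpace ℝ (Fin m))
    (hf_cont : Continuous f)
    (hf_mono : ∃ c : ℝ, 0 < c ∧ ∀ y : EuclideanSpace ℝ (Fin n),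
      ∀ x x' : EuclideanSpace ℝ (Fin m),
        ⟪f (x, y) - f (x', y), x - x'⟫_ℝ ≥ c * ‖x - x'‖ ^ 2) :
    ∃! g : EuclideanSpace ℝ (Fin n) → EuclideanSpace ℝ (Fin m),
      Continuous g ∧ ∀ y : EuclideanSpace ℝ (Fin n), f (g y, y) = 0 := by
  obtain ⟨c, hc, hmono⟩ := hf_mono
  obtain ⟨g, hg, hg0⟩ := SMAux.exists_cont m n f hf_cont c hc hmono
  refine ⟨g, ⟨hg, hg0⟩, ?_⟩
  rintro g' ⟨hg', hg'0⟩
  funext y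
  have h := hmono y (g' y) (g y)
  rw [hg0 y, hg'0 y] at h
  simp only [sub_self, inner_zero_left] at h
  have hsq : ‖g' y - g y‖ ^ 2 ≤ 0 := by nlinarith [h]
  have h0 : ‖g' y - g y‖ ^ 2 = 0 := le_antisymm hsq (sq_nonneg _)
  have hn : ‖g' y - g y‖ = 0 := by
    exact pow_eq_zero_iff two_ne_zero |>.mp h0
  have := norm_eq_zero.mp hn
  exact sub_eq_zero.mp this
end

section
/- Let f : ℝ^m × ℝ^n → ℝ^m be strongly monotone with respect to its first argument with monotonicity constant c > 0, and let g : ℝ^n → ℝ^m satisfy f(g(y), y) = 0 for all y ∈ ℝ^n. Then for all y, ȳ ∈ ℝ^n one has ‖g(y) - g(ȳ)‖ ≤ (1/c)‖f(g(ȳ), y)‖. -/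
open scoped InnerProductSpace

/-- If `f : ℝ^m × ℝ^n → ℝ^m` is strongly monotone with respect to its first argument
with constant `c > 0`, and `g : ℝ^n → ℝ^m` satisfies `f (g y, y) = 0` for all `y`, then
`‖g y - g y'‖ ≤ (1/c) * ‖f (g y', y)‖` for all `y, y'`. -/
theorem implicit_function_continuity_estimate {m n : ℕ}
    (f : EuclideanSpace ℝ (Fin m) × EuclideanSpace ℝ (Fin n) → EuclideanSpace ℝ (Fin m))
    (c : ℝ) (hc : 0 < c)
    (hf_mono : ∀ y : EuclideanSpace ℝ (Fin n), ∀ x x' : EuclideanSpace ℝ (Fin m),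
      ⟪f (x, y) - f (x', y), x - x'⟫_ℝ ≥ c * ‖x - x'‖ ^ 2)
    (g : EuclideanSpace ℝ (Fin n) → EuclideanSpace ℝ (Fin m))
    (hg : ∀ y : EuclideanSpace ℝ (Fin n), f (g y, y) = 0) :
    ∀ y y' : EuclideanSpace ℝ (Fin n), ‖g y - g y'‖ ≤ (1 / c) * ‖f (g y', y)‖ := by
  intro y y'
  have h1 := hf_mono y (g y) (g y')
  rw [hg y] at h1
  have h2 : ⟪(0 : EuclideanSpace ℝ (Fin m)) - f (g y', y), g y - g y'⟫_ℝ
      ≤ ‖f (g y', y)‖ * ‖g y - g y'‖ := by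
    calc ⟪(0 : EuclideanSpace ℝ (Fin m)) - f (g y', y), g y - g y'⟫_ℝ
        ≤ ‖(0 : EuclideanSpace ℝ (Fin m)) - f (g y', y)‖ * ‖g y - g y'‖ :=
          real_inner_le_norm _ _
      _ = ‖f (g y', y)‖ * ‖g y - g y'‖ := by rw [zero_sub, norm_neg]
  have key : c * ‖g y - g y'‖ ^ 2 ≤ ‖f (g y', y)‖ * ‖g y - g y'‖ := le_trans h1 h2
  rcases eq_or_ne (g y) (g y') with h | h
  · rw [h, sub_self, norm_zero]
    positivity
  · have hpos : 0 < ‖g y - g y'‖ := by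
      rw [norm_pos_iff]; exact sub_ne_zero_of_ne h
    rw [div_mul_eq_mul_div, le_div_iff₀ hc, mul_comm]
    have := (mul_le_mul_iff_of_pos_right hpos).mp (by nlinarith [key] : c * ‖g y - g y'‖ * ‖g y - g y'‖ ≤ ‖f (g y', y)‖ * ‖g y - g y'‖)
    linarith
end

section
/- Let M be a real m×k matrix and P a real k×k projector (P² = P) whose kernel equals the kernel of M (i.e., P projects along ker M). Let f : ℝ^m × ℝ^n → ℝ^m be continuous and strongly monotone with respect to its first argument, and let r : ℝ^n → ℝ^m be continuous. Then there exists a continuous function g : ℝ^n → ℝ^k such that for all z ∈ ℝ^k and y ∈ ℝ^n: Mᵀ f(Mz, y) + Pᵀ r(y) = 0 if and only if Pz = g(y). -/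
open scoped InnerProductSpace
open Filter Module

lemma real_strmono_existsUnique {c : ℝ} (hc : 0 < c) {ψ : ℝ → ℝ} (hψ : Continuous ψ)
    (hm : ∀ t s, c * (t - s) ^ 2 ≤ (ψ t - ψ s) * (t - s)) (β : ℝ) : ∃! t, ψ t = β := by
  have hsurj : Function.Surjective ψ := by
    apply hψ.surjective
    · apply tendsto_atTop_mono' atTop (_ : ∀ᶠ t in atTop, ψ 0 + c * t ≤ ψ t)
      · exact tendsto_atTop_add_const_left _ _ (tendsto_id.const_mul_atTop hc)
      · filter_upwards [eventually_ge_atTop 0] with t ht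
        rcases eq_or_lt_of_le ht with h | h
        · simp [← h]
        · have := hm t 0; nlinarith
    · apply tendsto_atBot_mono' atBot (_ : ∀ᶠ t in atBot, ψ t ≤ ψ 0 + c * t)
      · exact tendsto_atBot_add_const_left _ _ (tendsto_id.const_mul_atBot hc)
      · filter_upwards [eventually_le_atBot 0] with t ht
        rcases eq_or_lt_of_le ht with h | h
        · simp [h]
        · have := hm t 0; nlinarith
  obtain ⟨t, ht⟩ := hsurj β
  refine ⟨t, ht, fun s hs => ?_⟩
  have hst := hm s t
  rw [hs, ht] at hst
  have h3 : (s - t) ^ 2 = 0 := by nlinarith [sq_nonneg (s - t)]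
  have h4 : s - t = 0 := by
    have := sq_eq_zero_iff.mp h3
    simpa using this
  linarith

theorem strongMono_surjective_aux (d : ℕ) :
    ∀ (E : Type) [NormedAddCommGroup E] [InnerProductSpace ℝ E] [FiniteDimensional ℝ E],
      finrank ℝ E = d → ∀ (c : ℝ), 0 < c → ∀ F : E → E, Continuous F →
      (∀ x x', c * ‖x - x'‖ ^ 2 ≤ ⟪F x - F x', x - x'⟫_ℝ) → Function.Surjective F := by
  induction d with
  | zero =>
    intro E _ _ _ hE c hc F hF hm b
    have : Subsingleton E := finrank_zero_iff.mp hE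
    exact ⟨b, Subsingleton.elim _ _⟩
  | succ d ih =>
    intro E _ _ _ hE c hc F hF hm b
    have hnt : Nontrivial E := Module.nontrivial_of_finrank_pos (R := ℝ) (by omega)
    obtain ⟨v, hv⟩ := exists_norm_eq E (le_of_lt one_pos)
    have hv0 : v ≠ 0 := by intro h; rw [h] at hv; simp at hv
    set K := (ℝ ∙ v)ᗮ with hK
    have hKrank : finrank ℝ K = d := by
      rw [hK]
      have h1 : finrank ℝ (ℝ ∙ v) = 1 := finrank_span_singleton hv0
      have h2 := Submodule.finrank_add_finrank_orthogonal (K := (ℝ ∙ v))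
      omega
    set β := ⟪b, v⟫_ℝ with hβ
    -- scalar monotonicity along direction v
    have hmono1 : ∀ (w : E) (t s : ℝ),
        c * (t - s) ^ 2 ≤ (⟪F (w + t • v), v⟫_ℝ - ⟪F (w + s • v), v⟫_ℝ) * (t - s) := by
      intro w t s
      have h := hm (w + t • v) (w + s • v)
      have hd : (w + t • v) - (w + s • v) = (t - s) • v := by
        rw [sub_smul]; abel
      rw [hd, norm_smul, hv, real_inner_smul_right] at h
      calc c * (t - s) ^ 2 = c * (‖t - s‖ * 1) ^ 2 := by
            rw [mul_one, Real.norm_eq_abs, sq_abs]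
        _ ≤ (t - s) * ⟪F (w + t • v) - F (w + s • v), v⟫_ℝ := h
        _ = (⟪F (w + t • v), v⟫_ℝ - ⟪F (w + s • v), v⟫_ℝ) * (t - s) := by
            rw [inner_sub_left]; ring
    have hψcont : ∀ w : E, Continuous fun t : ℝ => ⟪F (w + t • v), v⟫_ℝ := by
      intro w
      exact (hF.comp (continuous_const.add (continuous_id.smul continuous_const))).inner
        continuous_const
    have hTex : ∀ x' : K, ∃! t, ⟪F ((x' : E) + t • v), v⟫_ℝ = β := fun x' =>
      real_strmono_existsUnique hc (hψcont (x' : E)) (hmono1 (x' : E)) β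
    choose T hT using fun x' : K => (hTex x').exists
    have hTu : ∀ (x' : K) (t : ℝ), ⟪F ((x' : E) + t • v), v⟫_ℝ = β → t = T x' := by
      intro x' t ht
      exact (hTex x').unique ht (hT x')
    -- continuity of T
    have hTbound : ∀ x₀ x' : K, c * |T x' - T x₀| ≤
        ‖F ((x₀ : E) + T x₀ • v) - F ((x' : E) + T x₀ • v)‖ := by
      intro x₀ x'
      have h := hmono1 (x' : E) (T x') (T x₀)
      rw [hT x'] at h
      set w := F ((x₀ : E) + T x₀ • v) - F ((x' : E) + T x₀ • v) with hw
      have hba : β - ⟪F ((x' : E) + T x₀ • v), v⟫_ℝ = ⟪w, v⟫_ℝ := by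
        rw [hw, inner_sub_left, ← hT x₀]
      rw [hba] at h
      have hCS : |⟪w, v⟫_ℝ| ≤ ‖w‖ := by
        have := abs_real_inner_le_norm w v
        rwa [hv, mul_one] at this
      rcases eq_or_lt_of_le (abs_nonneg (T x' - T x₀)) with h0 | h0
      · rw [← h0, mul_zero]; exact norm_nonneg w
      · have h1 : ⟪w, v⟫_ℝ * (T x' - T x₀) ≤ ‖w‖ * |T x' - T x₀| := by
          calc ⟪w, v⟫_ℝ * (T x' - T x₀) ≤ |⟪w, v⟫_ℝ * (T x' - T x₀)| := le_abs_self _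
            _ = |⟪w, v⟫_ℝ| * |T x' - T x₀| := abs_mul _ _
            _ ≤ ‖w‖ * |T x' - T x₀| := by
                exact mul_le_mul_of_nonneg_right hCS (abs_nonneg _)
        nlinarith [sq_abs (T x' - T x₀)]
    have hTcont : Continuous T := by
      rw [continuous_iff_continuousAt]
      intro x₀
      have hb : ∀ x' : K, dist (T x') (T x₀) ≤
          c⁻¹ * ‖F ((x₀ : E) + T x₀ • v) - F ((x' : E) + T x₀ • v)‖ := by
        intro x'
        rw [Real.dist_eq]
        have h := hTbound x₀ x'
        have h2 := mul_le_mul_of_nonneg_left h (le_of_lt (inv_pos.mpr hc))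
        rwa [← mul_assoc, inv_mul_cancel₀ (ne_of_gt hc), one_mul] at h2
      have hcont0 : Tendsto (fun x' : K =>
          c⁻¹ * ‖F ((x₀ : E) + T x₀ • v) - F ((x' : E) + T x₀ • v)‖) (nhds x₀) (nhds 0) := by
        have hc0 : Continuous fun x' : K =>
            c⁻¹ * ‖F ((x₀ : E) + T x₀ • v) - F ((x' : E) + T x₀ • v)‖ := by
          apply continuous_const.mul
          apply Continuous.norm
          apply Continuous.sub continuous_const
          exact hF.comp (continuous_subtype_val.add continuous_const)
        have := hc0.tendsto x₀
        simpa using this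
      rw [ContinuousAt, tendsto_iff_dist_tendsto_zero]
      exact squeeze_zero (fun _ => dist_nonneg) hb hcont0
    -- the reduced map on K
    set X : K → E := fun x' => (x' : E) + T x' • v with hX
    have hXcont : Continuous X := continuous_subtype_val.add (hTcont.smul continuous_const)
    set G : K → K := fun x' => K.orthogonalProjectionOnto (F (X x')) with hG
    have hGcont : Continuous G :=
      K.orthogonalProjectionOnto.continuous.comp (hF.comp hXcont)
    have hproj : ∀ (w u : E), u ∈ K → ⟪((K.orthogonalProjectionOnto w) : E), u⟫_ℝ
        = ⟪w, u⟫_ℝ := by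
      intro w u hu
      have h := K.starProjection_inner_eq_zero w u hu
      rw [Submodule.starProjection_apply, inner_sub_left] at h
      linarith
    have hGm : ∀ a a' : K, c * ‖a - a'‖ ^ 2 ≤ ⟪G a - G a', a - a'⟫_ℝ := by
      intro a a'
      have hmemaa : (a : E) - (a' : E) ∈ K := K.sub_mem a.2 a'.2
      have e1 : ⟪G a - G a', a - a'⟫_ℝ = ⟪F (X a) - F (X a'), (a : E) - (a' : E)⟫_ℝ := by
        have c1 : ⟪G a - G a', a - a'⟫_ℝ
            = ⟪((G a : E) - (G a' : E)), (a : E) - (a' : E)⟫_ℝ := by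
          rw [Submodule.coe_inner]; push_cast; rfl
        rw [c1, inner_sub_left, inner_sub_left]
        have g1 : (G a : E) = (K.orthogonalProjectionOnto (F (X a)) : E) := rfl
        have g2 : (G a' : E) = (K.orthogonalProjectionOnto (F (X a')) : E) := rfl
        rw [g1, g2, hproj (F (X a)) _ hmemaa, hproj (F (X a')) _ hmemaa]
      have e2 : ⟪F (X a) - F (X a'), X a - X a'⟫_ℝ
          = ⟪F (X a) - F (X a'), (a : E) - (a' : E)⟫_ℝ := by
        have hXd : X a - X a' = ((a : E) - (a' : E)) + (T a - T a') • v := by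
          rw [hX]; simp only []; rw [sub_smul]; abel
        rw [hXd, inner_add_right, real_inner_smul_right]
        have hzero : ⟪F (X a) - F (X a'), v⟫_ℝ = 0 := by
          rw [inner_sub_left]
          have h1 : ⟪F (X a), v⟫_ℝ = β := hT a
          have h2 : ⟪F (X a'), v⟫_ℝ = β := hT a'
          rw [h1, h2, sub_self]
        rw [hzero, mul_zero, add_zero]
      have e3 : c * ‖a - a'‖ ^ 2 ≤ c * ‖X a - X a'‖ ^ 2 := by
        have hXd : X a - X a' = ((a : E) - (a' : E)) + (T a - T a') • v := by
          rw [hX]; simp only []; rw [sub_smul]; abel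
        have horth : ⟪(a : E) - (a' : E), (T a - T a') • v⟫_ℝ = 0 := by
          rw [real_inner_smul_right]
          have hmem : (a : E) - (a' : E) ∈ K := K.sub_mem a.2 a'.2
          have := (Submodule.mem_orthogonal _ _).mp hmem v
              (Submodule.mem_span_singleton_self v)
          rw [real_inner_comm] at this
          rw [this, mul_zero]
        have hexp : ‖X a - X a'‖ ^ 2
            = ‖(a : E) - (a' : E)‖ ^ 2 + ‖(T a - T a') • v‖ ^ 2 := by
          rw [hXd, norm_add_sq_real, horth]; ring
        have hnc : ‖a - a'‖ = ‖(a : E) - (a' : E)‖ := by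
          rw [← Submodule.coe_sub]; rfl
        rw [hnc, hexp]
        nlinarith [sq_nonneg ‖(T a - T a') • v‖, norm_nonneg ((T a - T a') • v), hc]
      calc c * ‖a - a'‖ ^ 2 ≤ c * ‖X a - X a'‖ ^ 2 := e3
        _ ≤ ⟪F (X a) - F (X a'), X a - X a'⟫_ℝ := hm _ _
        _ = ⟪G a - G a', a - a'⟫_ℝ := by rw [e2, ← e1]
    obtain ⟨a, ha⟩ := ih K hKrank c hc G hGcont hGm (K.orthogonalProjectionOnto b)
    refine ⟨X a, ?_⟩
    have h1 : ⟪F (X a) - b, v⟫_ℝ = 0 := by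
      rw [inner_sub_left, hT a, hβ, sub_self]
    have hmem : F (X a) - b ∈ K := by
      rw [hK]
      intro u hu
      obtain ⟨r, rfl⟩ := Submodule.mem_span_singleton.mp hu
      rw [real_inner_smul_left, real_inner_comm, h1, mul_zero]
    have h2 : K.orthogonalProjectionOnto (F (X a) - b) = 0 := by
      rw [map_sub]
      have g1 : K.orthogonalProjectionOnto (F (X a)) = G a := rfl
      rw [g1, ha, sub_self]
    have h3 : ((K.orthogonalProjectionOnto (F (X a) - b) : E)) = F (X a) - b :=
      Submodule.starProjection_eq_self_iff.mpr hmem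
    rw [h2] at h3
    simp only [Submodule.coe_zero] at h3
    have h4 := h3.symm
    rw [sub_eq_zero] at h4
    exact h4

lemma euclid_adjoint {a b : ℕ} (B : Matrix (Fin a) (Fin b) ℝ)
    (u : EuclideanSpace ℝ (Fin a)) (w : EuclideanSpace ℝ (Fin b)) :
    ⟪B.transpose.toEuclideanLin u, w⟫_ℝ = ⟪u, B.toEuclideanLin w⟫_ℝ := by
  have h : B.transpose = B.conjTranspose := by
    ext i j; simp [Matrix.conjTranspose_apply]
  rw [h, Matrix.toEuclideanLin_conjTranspose_eq_adjoint]
  exact LinearMap.adjoint_inner_left _ _ _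

lemma euclid_comp {a : ℕ} (B C : Matrix (Fin a) (Fin a) ℝ) (v : EuclideanSpace ℝ (Fin a)) :
    (B * C).toEuclideanLin v = B.toEuclideanLin (C.toEuclideanLin v) := by
  simp [Matrix.toEuclideanLin_apply, Matrix.mulVec_mulVec]

set_option maxHeartbeats 1000000 in
/-- Let `M ∈ ℝ^{m×k}` and let `P ∈ ℝ^{k×k}` be a projector along `ker M`. If
`f : ℝ^m × ℝ^n → ℝ^m` is continuous and strongly monotone with respect to its first
argument and `r : ℝ^n → ℝ^m` is continuous, then there is a continuous `g : ℝ^n → ℝ^k`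
such that `Mᵀ f (M z, y) + Pᵀ r y = 0` if and only if `P z = g y`. -/
theorem projector_implicit_solution_form {m n k : ℕ}
    (M : Matrix (Fin m) (Fin k) ℝ) (P : Matrix (Fin k) (Fin k) ℝ)
    (hP_proj : P * P = P)
    (hP_ker : ∀ x : EuclideanSpace ℝ (Fin k),
      P.toEuclideanLin x = 0 ↔ M.toEuclideanLin x = 0)
    (f : EuclideanSpace ℝ (Fin m) × EuclideanSpace ℝ (Fin n) → EuclideanSpace ℝ (Fin m))
    (hf_cont : Continuous f)
    (hf_mono : ∃ c : ℝ, 0 < c ∧ ∀ y : EuclideanSpace ℝ (Fin n),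
      ∀ x x' : EuclideanSpace ℝ (Fin m),
        ⟪f (x, y) - f (x', y), x - x'⟫_ℝ ≥ c * ‖x - x'‖ ^ 2)
    (r : EuclideanSpace ℝ (Fin n) → EuclideanSpace ℝ (Fin k)) (hr_cont : Continuous r) :
    ∃ g : EuclideanSpace ℝ (Fin n) → EuclideanSpace ℝ (Fin k), Continuous g ∧
      ∀ (z : EuclideanSpace ℝ (Fin k)) (y : EuclideanSpace ℝ (Fin n)),
        M.transpose.toEuclideanLin (f (M.toEuclideanLin z, y))
            + P.transpose.toEuclideanLin (r y) = 0 ↔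
          P.toEuclideanLin z = g y := by
  classical
  obtain ⟨c, hc, hmono⟩ := hf_mono
  set A : EuclideanSpace ℝ (Fin k) →ₗ[ℝ] EuclideanSpace ℝ (Fin m) := M.toEuclideanLin with hA
  set A' : EuclideanSpace ℝ (Fin m) →ₗ[ℝ] EuclideanSpace ℝ (Fin k) :=
    M.transpose.toEuclideanLin with hA'
  set p : EuclideanSpace ℝ (Fin k) →ₗ[ℝ] EuclideanSpace ℝ (Fin k) := P.toEuclideanLin with hp
  set p' : EuclideanSpace ℝ (Fin k) →ₗ[ℝ] EuclideanSpace ℝ (Fin k) :=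
    P.transpose.toEuclideanLin with hp'
  have hAd : ∀ u w, ⟪A' u, w⟫_ℝ = ⟪u, A w⟫_ℝ := fun u w => euclid_adjoint M u w
  have hpd : ∀ u w, ⟪p' u, w⟫_ℝ = ⟪u, p w⟫_ℝ := fun u w => euclid_adjoint P u w
  have hpp : ∀ v, p (p v) = p v := by
    intro v
    rw [hp, ← euclid_comp, hP_proj]
  have hker : ∀ v, p v = 0 ↔ A v = 0 := hP_ker
  -- the auxiliary strongly monotone map
  set F : EuclideanSpace ℝ (Fin n) → EuclideanSpace ℝ (Fin k) → EuclideanSpace ℝ (Fin k) :=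
    fun y z => A' (f (A z, y)) + ((z - p z) - p' (z - p z)) with hF
  set q : EuclideanSpace ℝ (Fin k) →ₗ[ℝ] EuclideanSpace ℝ (Fin k) :=
    LinearMap.id - p with hq
  have hqv : ∀ v, q v = v - p v := fun v => rfl
  set L : EuclideanSpace ℝ (Fin k) →ₗ[ℝ]
      EuclideanSpace ℝ (Fin m) × EuclideanSpace ℝ (Fin k) :=
    LinearMap.prod (Real.sqrt c • A) q with hL
  have hFv : ∀ y z, F y z = A' (f (A z, y)) + (q z - p' (q z)) := by
    intro y z
    rw [hF]
    simp only [hqv]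
  have cA : Continuous A := A.continuous_of_finiteDimensional
  have cA' : Continuous A' := A'.continuous_of_finiteDimensional
  have cp : Continuous p := p.continuous_of_finiteDimensional
  have cp' : Continuous p' := p'.continuous_of_finiteDimensional
  clear_value A A' p p' q L F
  have hLker : LinearMap.ker L = ⊥ := by
    rw [LinearMap.ker_eq_bot']
    intro v hv
    rw [hL, LinearMap.prod_apply] at hv
    have h1 : Real.sqrt c • A v = 0 := congrArg Prod.fst hv
    have h2 : q v = 0 := congrArg Prod.snd hv
    have hAv : A v = 0 := by
      have hs : Real.sqrt c ≠ 0 := by positivity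
      have := congrArg (fun w => (Real.sqrt c)⁻¹ • w) h1
      simpa [smul_smul, inv_mul_cancel₀ hs] using this
    have hpv : p v = 0 := (hker v).mpr hAv
    rw [hqv, hpv, sub_zero] at h2
    exact h2
  obtain ⟨K, hK, hanti⟩ := L.exists_antilipschitzWith hLker
  set α : ℝ := ((K : ℝ) ^ 2)⁻¹ with hα
  have hK0 : (0:ℝ) < K := hK
  have hα0 : 0 < α := by positivity
  have hkey : ∀ v : EuclideanSpace ℝ (Fin k),
      α * ‖v‖ ^ 2 ≤ c * ‖A v‖ ^ 2 + ‖q v‖ ^ 2 := by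
    intro v
    have h1 : ‖v‖ ≤ K * ‖L v‖ := by
      have := hanti.le_mul_dist v 0
      simpa [dist_eq_norm] using this
    have h2 : ‖L v‖ ^ 2 ≤ c * ‖A v‖ ^ 2 + ‖q v‖ ^ 2 := by
      have hnp : ‖L v‖ = max ‖(Real.sqrt c • A) v‖ ‖q v‖ := by
        rw [hL, LinearMap.prod_apply, Prod.norm_def]
        rfl
      have hs1 : ‖(Real.sqrt c • A) v‖ ^ 2 = c * ‖A v‖ ^ 2 := by
        rw [LinearMap.smul_apply, norm_smul, Real.norm_eq_abs,
          abs_of_nonneg (Real.sqrt_nonneg c), mul_pow, Real.sq_sqrt hc.le]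
      rw [hnp]
      rcases max_cases ‖(Real.sqrt c • A) v‖ ‖q v‖ with ⟨hmax, _⟩ | ⟨hmax, _⟩ <;> rw [hmax] <;>
        nlinarith [sq_nonneg ‖q v‖, sq_nonneg ‖(Real.sqrt c • A) v‖]
    have h1' : ‖v‖ ^ 2 ≤ (K : ℝ) ^ 2 * ‖L v‖ ^ 2 := by
      have h0 : (0:ℝ) ≤ (K : ℝ) * ‖L v‖ := by positivity
      nlinarith [norm_nonneg v, h1]
    have h3 : ‖v‖ ^ 2 ≤ (K : ℝ) ^ 2 * (c * ‖A v‖ ^ 2 + ‖q v‖ ^ 2) :=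
      le_trans h1' (mul_le_mul_of_nonneg_left h2 (by positivity))
    rw [hα]
    rw [inv_mul_le_iff₀ (by positivity)]
    linarith [h3]
  -- strong monotonicity of F y
  have hFmono : ∀ y z z', α * ‖z - z'‖ ^ 2 ≤ ⟪F y z - F y z', z - z'⟫_ℝ := by
    intro y z z'
    rw [hFv, hFv]
    have hd : (A' (f (A z, y)) + (q z - p' (q z))) - (A' (f (A z', y)) + (q z' - p' (q z')))
        = A' (f (A z, y) - f (A z', y)) + (q (z - z') - p' (q (z - z'))) := by
      rw [map_sub A', map_sub q, map_sub p']
      abel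
    rw [hd, inner_add_left, inner_sub_left, hAd, hpd]
    have hqq : ⟪q (z - z'), z - z'⟫_ℝ - ⟪q (z - z'), p (z - z')⟫_ℝ = ‖q (z - z')‖ ^ 2 := by
      rw [← inner_sub_right]
      have h5 : (z - z') - p (z - z') = q (z - z') := (hqv _).symm
      rw [h5, real_inner_self_eq_norm_sq]
    have hm1 : c * ‖A (z - z')‖ ^ 2 ≤ ⟪f (A z, y) - f (A z', y), A (z - z')⟫_ℝ := by
      rw [map_sub]
      exact hmono y (A z) (A z')
    calc α * ‖z - z'‖ ^ 2 ≤ c * ‖A (z - z')‖ ^ 2 + ‖q (z - z')‖ ^ 2 := hkey _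
      _ ≤ ⟪f (A z, y) - f (A z', y), A (z - z')⟫_ℝ + ‖q (z - z')‖ ^ 2 :=
          by linarith [hm1]
      _ = ⟪f (A z, y) - f (A z', y), A (z - z')⟫_ℝ
          + (⟪q (z - z'), z - z'⟫_ℝ - ⟪q (z - z'), p (z - z')⟫_ℝ) := by rw [hqq]
  have hFinj : ∀ y z z', F y z = F y z' → z = z' := by
    intro y z z' h
    have h1 := hFmono y z z'
    rw [h, sub_self, inner_zero_left] at h1
    have h2 : ‖z - z'‖ ^ 2 ≤ 0 := by nlinarith [hα0]
    have h3 : ‖z - z'‖ = 0 := by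
      have h4 : ‖z - z'‖ ^ 2 = 0 := le_antisymm h2 (sq_nonneg _)
      exact sq_eq_zero_iff.mp h4
    rw [norm_eq_zero, sub_eq_zero] at h3
    exact h3
  have hFcont : ∀ y, Continuous (F y) := by
    intro y
    have : (F y) = fun z => A' (f (A z, y)) + (q z - p' (q z)) := funext fun z => hFv y z
    rw [this]
    exact (cA'.comp (hf_cont.comp (cA.prodMk continuous_const))).add
      ((q.continuous_of_finiteDimensional).sub (cp'.comp q.continuous_of_finiteDimensional))
  have hFsurj : ∀ y, Function.Surjective (F y) := fun y =>
    strongMono_surjective_aux k _ finrank_euclideanSpace_fin α hα0 (F y) (hFcont y)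
      (fun x x' => hFmono y x x')
  choose sol hsol using fun y => hFsurj y (-(p' (r y)))
  -- the solution lies in the range of p
  have hqsol : ∀ y, q (sol y) = 0 := by
    intro y
    set s := sol y with hs
    set u := q s with hu
    have hpu : p u = 0 := by rw [hu, hqv, map_sub, hpp, sub_self]
    have hAu : A u = 0 := (hker u).mp hpu
    have hequ : A' (f (A s, y)) + (u - p' u) = -(p' (r y)) := by
      have h := hsol y
      rw [hFv] at h
      exact h
    have h0 : ⟪A' (f (A s, y)) + (u - p' u), u⟫_ℝ = ⟪-(p' (r y)), u⟫_ℝ := by rw [hequ]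
    rw [inner_add_left, inner_sub_left, hAd, hpd, hAu, hpu, inner_zero_right,
      inner_zero_right, inner_neg_left, hpd, hpu, inner_zero_right] at h0
    have h1 : ⟪u, u⟫_ℝ = 0 := by linarith
    exact inner_self_eq_zero.mp h1
  have hsolEq : ∀ y, A' (f (A (sol y), y)) + p' (r y) = 0 := by
    intro y
    have h := hsol y
    rw [hFv, hqsol y, map_zero, sub_zero, add_zero] at h
    rw [h]
    exact neg_add_cancel _
  have hApz : ∀ z, A (p z) = A z := by
    intro z
    have h1 : p (z - p z) = 0 := by rw [map_sub, hpp, sub_self]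
    have h2 : A (z - p z) = 0 := (hker _).mp h1
    rw [map_sub, sub_eq_zero] at h2
    exact h2.symm
  -- continuity of the solution map
  have hsolcont : Continuous sol := by
    rw [continuous_iff_continuousAt]
    intro y₀
    set s₀ := sol y₀ with hs₀
    have hbound : ∀ y, α * ‖sol y - s₀‖ ≤
        ‖p' (r y₀) - p' (r y) + A' (f (A s₀, y₀) - f (A s₀, y))‖ := by
      intro y
      set e := p' (r y₀) - p' (r y) + A' (f (A s₀, y₀) - f (A s₀, y)) with he
      have h2 : F y s₀ = A' (f (A s₀, y)) := by
        rw [hFv, hs₀, hqsol y₀, map_zero, sub_zero, add_zero]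
      have h3 : A' (f (A s₀, y₀)) = -(p' (r y₀)) :=
        eq_neg_of_add_eq_zero_left (hsolEq y₀)
      have hFdiff : F y (sol y) - F y s₀ = e := by
        rw [hsol y, h2, he, map_sub A', h3]
        abel
      have hin := hFmono y (sol y) s₀
      rw [hFdiff] at hin
      have hCS : ⟪e, sol y - s₀⟫_ℝ ≤ ‖e‖ * ‖sol y - s₀‖ := real_inner_le_norm e _
      rcases eq_or_lt_of_le (norm_nonneg (sol y - s₀)) with h0 | h0
      · rw [← h0, mul_zero]; exact norm_nonneg e
      · nlinarith [hin, hCS]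
    have hb2 : ∀ y, dist (sol y) (sol y₀) ≤
        α⁻¹ * ‖p' (r y₀) - p' (r y) + A' (f (A s₀, y₀) - f (A s₀, y))‖ := by
      intro y
      rw [dist_eq_norm]
      have h := hbound y
      have h2 := mul_le_mul_of_nonneg_left h (le_of_lt (inv_pos.mpr hα0))
      rwa [← mul_assoc, inv_mul_cancel₀ (ne_of_gt hα0), one_mul] at h2
    have htend : Tendsto (fun y =>
        α⁻¹ * ‖p' (r y₀) - p' (r y) + A' (f (A s₀, y₀) - f (A s₀, y))‖)
        (nhds y₀) (nhds 0) := by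
      have hcont : Continuous fun y =>
          α⁻¹ * ‖p' (r y₀) - p' (r y) + A' (f (A s₀, y₀) - f (A s₀, y))‖ := by
        apply continuous_const.mul
        apply Continuous.norm
        apply Continuous.add
        · exact continuous_const.sub (cp'.comp hr_cont)
        · exact cA'.comp (continuous_const.sub
            (hf_cont.comp (continuous_const.prodMk continuous_id)))
      have h := hcont.tendsto y₀
      simpa using h
    rw [ContinuousAt, tendsto_iff_dist_tendsto_zero]
    exact squeeze_zero (fun _ => dist_nonneg) hb2 htend
  refine ⟨sol, hsolcont, ?_⟩
  intro z y
  constructor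
  · intro h
    apply hFinj y (p z) (sol y)
    have hqpz : q (p z) = 0 := by rw [hqv, hpp, sub_self]
    rw [hFv, hqpz, map_zero, sub_zero, add_zero, hApz, hsol y]
    exact eq_neg_of_add_eq_zero_left h
  · intro h
    have hAz : A z = A (sol y) := by rw [← hApz z, h]
    rw [hAz]
    exact hsolEq y
end

section
/- Let f : ℝ^m × ℝ^n → ℝ^m be strongly monotone with respect to its first argument with constant c > 0, let N be a nonzero real m×r matrix with trivial kernel (full column rank), and let s : ℝ^n → ℝ^r be any function. Then the function F : ℝ^r × ℝ^n → ℝ^r defined by F(u, y) := Nᵀ f(Nu, y) + s(y) is strongly monotone with respect to u; in particular it satisfies ⟨F(u,y) - F(ū,y), u - ū⟩ ≥ (c/c₁)‖u - ū‖² for all u, ū ∈ ℝ^r and y ∈ ℝ^n, where c₁ := ‖(NᵀN)⁻¹Nᵀ‖² > 0 (operator norm). -/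
open scoped InnerProductSpace Matrix.Norms.L2Operator

/-- If `f : ℝ^m × ℝ^n → ℝ^m` is strongly monotone in its first argument with constant
`c > 0`, and `N ∈ ℝ^{m×r}` is nonzero with full column rank, then
`F (u, y) := Nᵀ f (N u, y) + s y` is strongly monotone in `u` with constant `c / c₁`,
where `c₁ = ‖(NᵀN)⁻¹Nᵀ‖² > 0` (`‖·‖` the `ℓ²` operator norm). -/
theorem transformed_strongly_monotone {m n r : ℕ}
    (f : EuclideanSpace ℝ (Fin m) × EuclideanSpace ℝ (Fin n) → EuclideanSpace ℝ (Fin m))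
    (c : ℝ) (hc : 0 < c)
    (hf_mono : ∀ y : EuclideanSpace ℝ (Fin n), ∀ x x' : EuclideanSpace ℝ (Fin m),
      ⟪f (x, y) - f (x', y), x - x'⟫_ℝ ≥ c * ‖x - x'‖ ^ 2)
    (N : Matrix (Fin m) (Fin r) ℝ) (hN : N ≠ 0)
    (hN_inj : ∀ x : EuclideanSpace ℝ (Fin r), N.toEuclideanLin x = 0 → x = 0)
    (s : EuclideanSpace ℝ (Fin n) → EuclideanSpace ℝ (Fin r))
    (F : EuclideanSpace ℝ (Fin r) × EuclideanSpace ℝ (Fin n) → EuclideanSpace ℝ (Fin r))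
    (hF : ∀ (u : EuclideanSpace ℝ (Fin r)) (y : EuclideanSpace ℝ (Fin n)),
      F (u, y) = N.transpose.toEuclideanLin (f (N.toEuclideanLin u, y)) + s y)
    (c₁ : ℝ) (hc₁ : c₁ = ‖(N.transpose * N)⁻¹ * N.transpose‖ ^ 2) :
    0 < c₁ ∧ ∀ (y : EuclideanSpace ℝ (Fin n)) (u u' : EuclideanSpace ℝ (Fin r)),
      ⟪F (u, y) - F (u', y), u - u'⟫_ℝ ≥ (c / c₁) * ‖u - u'‖ ^ 2 := by
  classical
  set M : Matrix (Fin r) (Fin m) ℝ := (N.transpose * N)⁻¹ * N.transpose with hM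
  have hmv : ∀ x : Fin r → ℝ, N.mulVec x = 0 → x = 0 := by
    intro x hx
    have h2 := hN_inj ((WithLp.equiv 2 (Fin r → ℝ)).symm x) ?_
    · simpa using congrArg (WithLp.equiv 2 (Fin r → ℝ)) h2
    · rw [show (WithLp.equiv 2 (Fin r → ℝ)).symm x = WithLp.toLp 2 x from rfl, Matrix.toEuclideanLin_apply_piLp_toLp, hx]
      simp
  have hpd : (N.transpose * N).PosDef := by
    refine Matrix.PosDef.of_dotProduct_mulVec_pos ?_ ?_
    · have := Matrix.isHermitian_conjTranspose_mul_self N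
      simpa [Matrix.conjTranspose_eq_transpose_of_trivial] using this
    · intro x hx
      have hx' : N.mulVec x ≠ 0 := fun h => hx (hmv x h)
      have heq : dotProduct (star x) ((N.transpose * N).mulVec x)
          = dotProduct (N.mulVec x) (N.mulVec x) := by
        rw [← Matrix.mulVec_mulVec, Matrix.dotProduct_mulVec, Matrix.vecMul_transpose]
        simp [dotProduct_comm]
      rw [heq]
      obtain ⟨i, hi⟩ := Function.ne_iff.mp hx'
      exact Finset.sum_pos' (fun i _ => mul_self_nonneg _)
        ⟨i, Finset.mem_univ i, mul_self_pos.mpr hi⟩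
  have hMN : M * N = 1 := by
    rw [hM, Matrix.mul_assoc, Matrix.nonsing_inv_mul _
      ((Matrix.isUnit_iff_isUnit_det _).mp hpd.isUnit)]
  -- r is nonempty
  have hr : Nonempty (Fin r) := by
    by_contra h
    exact hN (by ext i j; exact absurd ⟨j⟩ h)
  obtain ⟨j⟩ := hr
  have hMne : M ≠ 0 := by
    intro h
    have h1 : (1 : Matrix (Fin r) (Fin r) ℝ) j j = 0 := by
      rw [← hMN, h, Matrix.zero_mul]; rfl
    simp at h1
  have hMpos : 0 < ‖M‖ := norm_pos_iff.mpr hMne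
  have hc₁pos : 0 < c₁ := by rw [hc₁]; positivity
  refine ⟨hc₁pos, fun y u u' => ?_⟩
  set v : EuclideanSpace ℝ (Fin r) := u - u' with hv
  set Nv : EuclideanSpace ℝ (Fin m) := N.toEuclideanLin v with hNv
  -- adjoint identity
  have hadj : (N.transpose.toEuclideanLin :
        EuclideanSpace ℝ (Fin m) →ₗ[ℝ] EuclideanSpace ℝ (Fin r))
      = LinearMap.adjoint N.toEuclideanLin := by
    rw [← Matrix.toEuclideanLin_conjTranspose_eq_adjoint,
      Matrix.conjTranspose_eq_transpose_of_trivial]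
  have hinner : ⟪F (u, y) - F (u', y), v⟫_ℝ
      = ⟪f (N.toEuclideanLin u, y) - f (N.toEuclideanLin u', y), Nv⟫_ℝ := by
    rw [hF, hF]
    have hsub : N.transpose.toEuclideanLin (f (N.toEuclideanLin u, y)) + s y -
        (N.transpose.toEuclideanLin (f (N.toEuclideanLin u', y)) + s y)
        = N.transpose.toEuclideanLin
          (f (N.toEuclideanLin u, y) - f (N.toEuclideanLin u', y)) := by
      rw [map_sub]; abel
    rw [hsub, hadj, LinearMap.adjoint_inner_left, hNv, hv, map_sub]
  have hmono := hf_mono y (N.toEuclideanLin u) (N.toEuclideanLin u')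
  have hxsub : N.toEuclideanLin u - N.toEuclideanLin u' = Nv := by
    rw [hNv, hv, map_sub]
  rw [hxsub] at hmono
  -- norm bound
  have hkey : ‖v‖ ≤ ‖M‖ * ‖Nv‖ := by
    have hveq : v = M.toEuclideanLin Nv := by
      have : M.toEuclideanLin Nv = (M * N).toEuclideanLin v := by
        simp only [hNv, Matrix.toEuclideanLin_apply, Equiv.apply_symm_apply,
          Matrix.mulVec_mulVec]
      rw [this, hMN]
      simp [Matrix.toEuclideanLin_apply]
    calc ‖v‖ = ‖M.toEuclideanLin Nv‖ := by rw [← hveq]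
      _ ≤ ‖M‖ * ‖Nv‖ := by
        simpa [Matrix.toEuclideanLin_apply] using Matrix.l2_opNorm_mulVec M Nv
  have hsq : ‖v‖ ^ 2 ≤ c₁ * ‖Nv‖ ^ 2 := by
    rw [hc₁]
    calc ‖v‖ ^ 2 ≤ (‖M‖ * ‖Nv‖) ^ 2 := by
          apply pow_le_pow_left₀ (norm_nonneg _) hkey
      _ = ‖M‖ ^ 2 * ‖Nv‖ ^ 2 := by ring
  calc ⟪F (u, y) - F (u', y), v⟫_ℝ
      = ⟪f (N.toEuclideanLin u, y) - f (N.toEuclideanLin u', y), Nv⟫_ℝ := hinner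
    _ ≥ c * ‖Nv‖ ^ 2 := hmono
    _ ≥ (c / c₁) * ‖v‖ ^ 2 := by
        rw [ge_iff_le, div_mul_eq_mul_div, div_le_iff₀ hc₁pos]
        calc c * ‖v‖ ^ 2 ≤ c * (c₁ * ‖Nv‖ ^ 2) := by
              exact mul_le_mul_of_nonneg_left hsq hc.le
          _ = c * ‖Nv‖ ^ 2 * c₁ := by ring
end

section
/- Let M be a real k×m matrix and P a real k×k projector (P² = P) whose kernel equals the kernel of M. Let r : ℝ^n → ℝ^m be continuous. Then there exists a continuous function g : ℝ^n → ℝ^k such that for all z ∈ ℝ^k and y ∈ ℝ^n: Mᵀ M z + Pᵀ r(y) = 0 if and only if Pz = g(y). -/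
/-- Let `M` be a real matrix with `k` columns and `P ∈ ℝ^{k×k}` a projector along
`ker M`, and let `r : ℝ^n → ℝ^k` be continuous. Then there is a continuous
`g : ℝ^n → ℝ^k` such that `MᵀM z + Pᵀ r y = 0` if and only if `P z = g y`. -/
theorem projector_linear_solution_form {m n k : ℕ}
    (M : Matrix (Fin m) (Fin k) ℝ) (P : Matrix (Fin k) (Fin k) ℝ)
    (hP_proj : P * P = P)
    (hP_ker : ∀ x : EuclideanSpace ℝ (Fin k),
      P.toEuclideanLin x = 0 ↔ M.toEuclideanLin x = 0)
    (r : EuclideanSpace ℝ (Fin n) → EuclideanSpace ℝ (Fin k)) (hr_cont : Continuous r) :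
    ∃ g : EuclideanSpace ℝ (Fin n) → EuclideanSpace ℝ (Fin k), Continuous g ∧
      ∀ (z : EuclideanSpace ℝ (Fin k)) (y : EuclideanSpace ℝ (Fin n)),
        (M.transpose * M).toEuclideanLin z + P.transpose.toEuclideanLin (r y) = 0 ↔
          P.toEuclideanLin z = g y := by
  let p : EuclideanSpace ℝ (Fin k) →ₗ[ℝ] EuclideanSpace ℝ (Fin k) := P.toEuclideanLin
  let mm : EuclideanSpace ℝ (Fin k) →ₗ[ℝ] EuclideanSpace ℝ (Fin m) := M.toEuclideanLin
  let a : EuclideanSpace ℝ (Fin k) →ₗ[ℝ] EuclideanSpace ℝ (Fin k) :=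
    (M.transpose * M).toEuclideanLin
  let pt : EuclideanSpace ℝ (Fin k) →ₗ[ℝ] EuclideanSpace ℝ (Fin k) :=
    P.transpose.toEuclideanLin
  have hmul : ∀ {q s t : ℕ} (A : Matrix (Fin q) (Fin s) ℝ) (B : Matrix (Fin s) (Fin t) ℝ)
      (x : EuclideanSpace ℝ (Fin t)),
      (A * B).toEuclideanLin x = A.toEuclideanLin (B.toEuclideanLin x) := by
    intro q s t A B x
    rw [Matrix.toEuclideanLin_apply, Matrix.toEuclideanLin_apply, Matrix.toEuclideanLin_apply,
      WithLp.ofLp_toLp, Matrix.mulVec_mulVec]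
  -- adjoint identifications
  have hpt : pt = LinearMap.adjoint p := by
    show P.transpose.toEuclideanLin = _
    rw [← Matrix.conjTranspose_eq_transpose_of_trivial]
    exact Matrix.toEuclideanLin_conjTranspose_eq_adjoint P
  have hmt : (M.transpose).toEuclideanLin = LinearMap.adjoint mm := by
    rw [← Matrix.conjTranspose_eq_transpose_of_trivial]
    exact Matrix.toEuclideanLin_conjTranspose_eq_adjoint M
  have ha : ∀ x : EuclideanSpace ℝ (Fin k), a x = LinearMap.adjoint mm (mm x) := by
    intro x
    rw [← hmt]
    exact hmul M.transpose M x
  -- idempotency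
  have hpp : ∀ x : EuclideanSpace ℝ (Fin k), p (p x) = p x := by
    intro x
    have h1 := hmul P P x
    rw [hP_proj] at h1
    exact h1.symm
  -- inner product facts
  have hinner : ∀ u v : EuclideanSpace ℝ (Fin k),
      (inner ℝ (a u) v : ℝ) = inner ℝ (mm u) (mm v) := by
    intro u v
    rw [ha, LinearMap.adjoint_inner_left]
  have hsa : ∀ u v : EuclideanSpace ℝ (Fin k),
      (inner ℝ (a u) v : ℝ) = inner ℝ u (a v) := by
    intro u v
    calc (inner ℝ (a u) v : ℝ) = inner ℝ (mm u) (mm v) := hinner u v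
      _ = inner ℝ (mm v) (mm u) := real_inner_comm _ _
      _ = inner ℝ (a v) u := (hinner v u).symm
      _ = inner ℝ u (a v) := real_inner_comm _ _
  -- kernel facts
  have hker_a : ∀ x : EuclideanSpace ℝ (Fin k), a x = 0 ↔ mm x = 0 := by
    intro x
    constructor
    · intro h
      have h1 : (inner ℝ (mm x) (mm x) : ℝ) = 0 := by rw [← hinner, h, inner_zero_left]
      exact inner_self_eq_zero.mp h1
    · intro h
      rw [ha, h, map_zero]
  have hpa : ∀ x : EuclideanSpace ℝ (Fin k), p x = 0 ↔ a x = 0 :=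
    fun x => (hP_ker x).trans (hker_a x).symm
  -- a (p z) = a z
  have hapz : ∀ z : EuclideanSpace ℝ (Fin k), a (p z) = a z := by
    intro z
    have h1 : p (z - p z) = 0 := by rw [map_sub, hpp, sub_self]
    have h2 : a (z - p z) = 0 := (hpa _).mp h1
    rw [map_sub, sub_eq_zero] at h2
    exact h2.symm
  -- the auxiliary invertible map c
  let c : EuclideanSpace ℝ (Fin k) →ₗ[ℝ] EuclideanSpace ℝ (Fin k) :=
    a ∘ₗ p + (LinearMap.id - p)
  have hc_apply : ∀ x : EuclideanSpace ℝ (Fin k), c x = a (p x) + (x - p x) := fun x => rfl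
  have hc_inj : Function.Injective c := by
    rw [injective_iff_map_eq_zero]
    intro x hx
    rw [hc_apply] at hx
    have hv : p (x - p x) = 0 := by rw [map_sub, hpp, sub_self]
    have hav : a (x - p x) = 0 := (hpa _).mp hv
    have h2 : a (a (p x)) = 0 := by
      have h := congrArg a hx
      rw [map_add, hav, add_zero, map_zero] at h
      exact h
    have h3 : a (p x) = 0 := by
      have hin : (inner ℝ (a (p x)) (a (p x)) : ℝ) = 0 := by
        rw [← hsa, h2, inner_zero_left]
      exact inner_self_eq_zero.mp hin
    have h4 : p x = 0 := by
      have h := (hpa (p x)).mpr h3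
      rw [hpp] at h
      exact h
    rw [h3, h4, zero_add, sub_zero] at hx
    exact hx
  have hc_surj : Function.Surjective c :=
    (LinearMap.injective_iff_surjective).mp hc_inj
  let cE : EuclideanSpace ℝ (Fin k) ≃ₗ[ℝ] EuclideanSpace ℝ (Fin k) :=
    LinearEquiv.ofBijective c ⟨hc_inj, hc_surj⟩
  -- the solution map
  let u : EuclideanSpace ℝ (Fin k) →ₗ[ℝ] EuclideanSpace ℝ (Fin k) :=
    p ∘ₗ (cE.symm : EuclideanSpace ℝ (Fin k) ≃ₗ[ℝ] EuclideanSpace ℝ (Fin k)).toLinearMap ∘ₗ pt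
  have hu_apply : ∀ w, u w = p (cE.symm (pt w)) := fun w => rfl
  have hpu : ∀ w, p (u w) = u w := by intro w; rw [hu_apply, hpp]
  have hau : ∀ w, a (u w) = pt w := by
    intro w
    have hc : c (cE.symm (pt w)) = pt w := cE.apply_symm_apply (pt w)
    rw [hc_apply] at hc
    set w' : EuclideanSpace ℝ (Fin k) := cE.symm (pt w) with hw'
    set v : EuclideanSpace ℝ (Fin k) := pt w - a (p w') with hv_def
    have hv_eq : v = w' - p w' := by rw [hv_def, ← hc]; abel
    have hpv : p v = 0 := by rw [hv_eq, map_sub, hpp, sub_self]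
    have hav : a v = 0 := (hpa _).mp hpv
    have hvz : v = 0 := by
      have hterm1 : (inner ℝ (pt w) v : ℝ) = 0 := by
        rw [hpt, LinearMap.adjoint_inner_left, hpv, inner_zero_right]
      have hterm2 : (inner ℝ (a (p w')) v : ℝ) = 0 := by
        rw [hsa, hav, inner_zero_right]
      have h1 : (inner ℝ v v : ℝ) = 0 := by
        calc (inner ℝ v v : ℝ) = inner ℝ (pt w - a (p w')) v := by rw [hv_def]
          _ = inner ℝ (pt w) v - inner ℝ (a (p w')) v := inner_sub_left _ _ _
          _ = 0 := by rw [hterm1, hterm2, sub_zero]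
      exact inner_self_eq_zero.mp h1
    have h2 : a (p w') = pt w := by
      rw [hv_def, sub_eq_zero] at hvz
      exact hvz.symm
    rw [hu_apply, ← hw']
    exact h2
  -- the function g
  refine ⟨fun y => -(u (r y)), ((u.continuous_of_finiteDimensional).comp hr_cont).neg, ?_⟩
  intro z y
  show a z + pt (r y) = 0 ↔ p z = -(u (r y))
  constructor
  · intro h
    have h1 : a (p z + u (r y)) = 0 := by
      rw [map_add, hapz, hau]
      exact h
    have h2 : p (p z + u (r y)) = 0 := (hpa _).mpr h1
    rw [map_add, hpp, hpu] at h2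
    exact eq_neg_of_add_eq_zero_left h2
  · intro h
    have h1 : a z = a (p z) := (hapz z).symm
    rw [h1, h, map_neg, hau, neg_add_cancel]
end

section
/- Let L be a real symmetric positive definite n×n matrix, let Q ∈ ℝ^{n×k} and Y ∈ ℝ^{n×p} both have full column rank, and suppose that the ranges of Q and Y intersect trivially, i.e., Q x₁ = Y x₂ with x₁ ∈ ℝ^k, x₂ ∈ ℝ^p implies x₁ = 0 and x₂ = 0. Then the p×p matrix C := Yᵀ (L − L Q (Qᵀ L Q)⁻¹ Qᵀ L) Y is symmetric positive definite. -/
open Matrix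

lemma dot_mulVec_swap {m n : ℕ} (A : Matrix (Fin m) (Fin n) ℝ) (v : Fin m → ℝ)
    (w : Fin n → ℝ) : v ⬝ᵥ A.mulVec w = A.transpose.mulVec v ⬝ᵥ w := by
  rw [Matrix.dotProduct_mulVec, Matrix.mulVec_transpose]

/-- Let `L` be real symmetric positive definite, `Q ∈ ℝ^{n×k}` and `Y ∈ ℝ^{n×p}` with
full column rank and trivially intersecting ranges. Then
`C := Yᵀ (L − L Q (Qᵀ L Q)⁻¹ Qᵀ L) Y` is symmetric positive definite. -/
theorem schur_like_posDef {n k p : ℕ}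
    (L : Matrix (Fin n) (Fin n) ℝ) (hL_symm : L.transpose = L)
    (hL_pos : ∀ x : Fin n → ℝ, x ≠ 0 → 0 < x ⬝ᵥ L.mulVec x)
    (Q : Matrix (Fin n) (Fin k) ℝ)
    (hQ : ∀ x : Fin k → ℝ, Q.mulVec x = 0 → x = 0)
    (Y : Matrix (Fin n) (Fin p) ℝ)
    (hY : ∀ x : Fin p → ℝ, Y.mulVec x = 0 → x = 0)
    (h_ranges : ∀ (x₁ : Fin k → ℝ) (x₂ : Fin p → ℝ),
      Q.mulVec x₁ = Y.mulVec x₂ → x₁ = 0 ∧ x₂ = 0)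
    (C : Matrix (Fin p) (Fin p) ℝ)
    (hC : C = Y.transpose * (L - L * Q * (Q.transpose * L * Q)⁻¹ * Q.transpose * L) * Y) :
    C.transpose = C ∧ ∀ x : Fin p → ℝ, x ≠ 0 → 0 < x ⬝ᵥ C.mulVec x := by
  set M : Matrix (Fin k) (Fin k) ℝ := Q.transpose * L * Q with hM
  have hM_symm : M.transpose = M := by
    simp [hM, Matrix.transpose_mul, hL_symm, Matrix.mul_assoc]
  have hM_pd : M.PosDef := by
    refine Matrix.posDef_iff_dotProduct_mulVec.mpr ⟨by simpa [Matrix.IsHermitian] using hM_symm, ?_⟩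
    intro x hx
    have hQx : Q.mulVec x ≠ 0 := fun h => hx (hQ x h)
    have key : x ⬝ᵥ M.mulVec x = (Q.mulVec x) ⬝ᵥ L.mulVec (Q.mulVec x) := by
      rw [hM, ← Matrix.mulVec_mulVec, ← Matrix.mulVec_mulVec,
        dot_mulVec_swap Q.transpose, Matrix.transpose_transpose]
    have := hL_pos (Q.mulVec x) hQx
    simpa [key] using this
  have hdet : IsUnit M.det := isUnit_iff_ne_zero.mpr hM_pd.det_pos.ne'
  have hMinv : M * M⁻¹ = 1 := Matrix.mul_nonsing_inv M hdet
  have hMinv_symm : (M⁻¹).transpose = M⁻¹ := by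
    rw [Matrix.transpose_nonsing_inv, hM_symm]
  constructor
  · subst hC
    simp only [Matrix.transpose_mul, Matrix.transpose_sub, Matrix.transpose_transpose,
      hL_symm, hMinv_symm, Matrix.mul_assoc]
  · intro x hx
    set y : Fin n → ℝ := Y.mulVec x with hy
    set a : Fin k → ℝ := Q.transpose.mulVec (L.mulVec y) with ha
    set w : Fin k → ℝ := M⁻¹.mulVec a with hw
    set z : Fin n → ℝ := y - Q.mulVec w with hz
    have hMw : M.mulVec w = a := by
      rw [hw, Matrix.mulVec_mulVec, hMinv, Matrix.one_mulVec]
    have hLQ : ∀ v : Fin n → ℝ, ∀ u : Fin k → ℝ,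
        v ⬝ᵥ L.mulVec (Q.mulVec u) = (Q.transpose.mulVec (L.mulVec v)) ⬝ᵥ u := by
      intro v u
      rw [dot_mulVec_swap L, hL_symm, dot_mulVec_swap Q]
    have key : x ⬝ᵥ C.mulVec x = z ⬝ᵥ L.mulVec z := by
      have lhs : x ⬝ᵥ C.mulVec x = y ⬝ᵥ L.mulVec y - a ⬝ᵥ w := by
        rw [hC]
        rw [← Matrix.mulVec_mulVec, ← Matrix.mulVec_mulVec, dot_mulVec_swap Y.transpose,
          Matrix.transpose_transpose, ← hy, Matrix.sub_mulVec, dotProduct_sub]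
        congr 1
        simp only [← Matrix.mulVec_mulVec]
        rw [hLQ y, ← ha, ← hw]
      have rhs : z ⬝ᵥ L.mulVec z = y ⬝ᵥ L.mulVec y - a ⬝ᵥ w := by
        rw [hz, Matrix.mulVec_sub, sub_dotProduct, dotProduct_sub,
          dotProduct_sub]
        have h1 : y ⬝ᵥ L.mulVec (Q.mulVec w) = a ⬝ᵥ w := by rw [hLQ y, ← ha]
        have h2 : (Q.mulVec w) ⬝ᵥ L.mulVec y = a ⬝ᵥ w := by
          rw [dotProduct_comm, dot_mulVec_swap Q, ← ha]
        have h3 : (Q.mulVec w) ⬝ᵥ L.mulVec (Q.mulVec w) = a ⬝ᵥ w := by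
          rw [hLQ (Q.mulVec w) w, Matrix.mulVec_mulVec, Matrix.mulVec_mulVec,
            ← hM, hMw]
        rw [h1, h2, h3]
        ring
      rw [lhs, rhs]
    have hzne : z ≠ 0 := by
      intro h
      have h0 : y - Q.mulVec w = 0 := by rw [← hz]; exact h
      have h1 : Q.mulVec w = Y.mulVec x := by
        rw [← hy]; exact (sub_eq_zero.mp h0).symm
      exact hx (h_ranges w x h1).2
    rw [key]
    exact hL_pos z hzne
end
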